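/- Let (F,W) be a mixed Hodge structure on V. Then there exists a unique bigrading V = ⊕_{p,q∈ℤ} I^{p,q} by complex subspaces such that: (a) F^p = ⊕_{r≥p, s} I^{r,s} for all p; (b) W_k = ⊕_{r+s≤k} I^{r,s} for all k; (c) σ(I^{p,q}) ⊆ I^{q,p} + ⊕_{r<q, s<p} I^{r,s} for all p,q. -/

import Mathlib

/-- A finite increasing filtration of `V` indexed by `ℤ`. -/
def FinIncrFil {V : Type*} [AddCommGroup V] [Module ℂ V] (W : ℤ → Submodule ℂ V) : Prop :=
  Monotone W ∧ (∃ a : ℤ, W a = ⊥) ∧ (∃ b : ℤ, W b = ⊤)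

/-- A finite decreasing filtration of `V` indexed by `ℤ`. -/
def FinDecrFil {V : Type*} [AddCommGroup V] [Module ℂ V] (F : ℤ → Submodule ℂ V) : Prop :=
  Antitone F ∧ (∃ a : ℤ, F a = ⊤) ∧ (∃ b : ℤ, F b = ⊥)

/-- `σ` is a conjugation: a conjugate-linear involution of the complex vector space `V`
(realizing `V` as the complexification of its fixed set `V_ℝ`). -/
def IsConjugation {V : Type*} [AddCommGroup V] [Module ℂ V] (σ : V →ₗ[ℝ] V) : Prop :=
  (∀ v, σ (σ v) = v) ∧ ∀ (c : ℂ) (v : V), σ (c • v) = (starRingEnd ℂ) c • σ v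

/-- `(F, W)` is a mixed Hodge structure on `V` with respect to the conjugation `σ`:
`W` is a finite increasing σ-stable filtration, `F` a finite decreasing filtration,
and for every `k`, `Gr^W_k = F^p Gr^W_k ⊕ σ(F^{k-p+1} Gr^W_k)` for all `p`
(expressed elementwise on representatives). -/
def IsMHS {V : Type*} [AddCommGroup V] [Module ℂ V] (σ : V →ₗ[ℝ] V)
    (F W : ℤ → Submodule ℂ V) : Prop :=
  FinIncrFil W ∧ (∀ k : ℤ, ∀ v ∈ W k, σ v ∈ W k) ∧ FinDecrFil F ∧
    ∀ k p : ℤ,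
      (∀ v ∈ W k, ∃ a ∈ F p ⊓ W k, ∃ b ∈ F (k - p + 1) ⊓ W k, v - a - σ b ∈ W (k - 1)) ∧
      (∀ a ∈ F p ⊓ W k, ∀ b ∈ F (k - p + 1) ⊓ W k, a - σ b ∈ W (k - 1) → a ∈ W (k - 1))

/-- A grading of an increasing filtration `W` of a complex vector space: a semisimple
endomorphism with integer eigenvalues with `W i = E_i(Y) ⊕ W (i-1)` for all `i`. -/
def IsGrading {V : Type*} [AddCommGroup V] [Module ℂ V] (W : ℤ → Submodule ℂ V)
    (Y : Module.End ℂ V) : Prop :=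
  (⨆ i : ℤ, Y.eigenspace (i : ℂ)) = ⊤ ∧
    ∀ i : ℤ, W i = Y.eigenspace (i : ℂ) ⊔ W (i - 1) ∧
      Disjoint (Y.eigenspace (i : ℂ)) (W (i - 1))

/-- An endomorphism `X` of `V` is real: `σ X σ = X`. -/
def IsRealEnd {V : Type*} [AddCommGroup V] [Module ℂ V] (σ : V →ₗ[ℝ] V)
    (X : Module.End ℂ V) : Prop :=
  ∀ v, σ (X (σ v)) = X v

/-- `I` is a Deligne bigrading of the mixed Hodge structure `(F, W)`:
`V = ⊕_{p,q} I^{p,q}`, with (a) `F^p = ⊕_{r ≥ p, s} I^{r,s}`,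
(b) `W_k = ⊕_{r+s ≤ k} I^{r,s}`, and
(c) `σ(I^{p,q}) ⊆ I^{q,p} + ⊕_{r<q, s<p} I^{r,s}`. -/
def IsDeligneBigrading {V : Type*} [AddCommGroup V] [Module ℂ V] (σ : V →ₗ[ℝ] V)
    (F W : ℤ → Submodule ℂ V) (I : ℤ → ℤ → Submodule ℂ V) : Prop :=
  DirectSum.IsInternal (fun pq : ℤ × ℤ => I pq.1 pq.2) ∧
  (∀ p : ℤ, F p = ⨆ (r : ℤ) (_ : p ≤ r) (s : ℤ), I r s) ∧
  (∀ k : ℤ, W k = ⨆ (r : ℤ) (s : ℤ) (_ : r + s ≤ k), I r s) ∧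
  (∀ p q : ℤ, ∀ v ∈ I p q,
    σ v ∈ I q p ⊔ ⨆ (r : ℤ) (_ : r < q) (s : ℤ) (_ : s < p), I r s)

/-- The endomorphism `Y` acts as multiplication by `p + q` on each `I^{p,q}`
(this characterizes the Deligne grading of a bigraded mixed Hodge structure). -/
def ActsAsDeligneGrading {V : Type*} [AddCommGroup V] [Module ℂ V]
    (I : ℤ → ℤ → Submodule ℂ V) (Y : Module.End ℂ V) : Prop :=
  ∀ p q : ℤ, ∀ v ∈ I p q, Y v = ((p + q : ℤ) : ℂ) • v

section DeligneProof

variable {V : Type*} [AddCommGroup V] [Module ℂ V]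

private lemma int_down_induction (b : ℤ) (P : ℤ → Prop) (hb : ∀ p, b ≤ p → P p)
    (hstep : ∀ p, P (p + 1) → P p) : ∀ p, P p := by
  have key : ∀ n : ℕ, ∀ p, b - n ≤ p → P p := by
    intro n
    induction n with
    | zero => intro p hp; exact hb p (by omega)
    | succ n ih =>
      intro p hp
      by_cases h : b - n ≤ p
      · exact ih p h
      · exact hstep p (ih (p + 1) (by omega))
  intro p
  exact key (b - p).toNat p (by omega)

private lemma int_up_induction (a : ℤ) (P : ℤ → Prop) (ha : ∀ k, k ≤ a → P k)
    (hstep : ∀ k, P (k - 1) → P k) : ∀ k, P k := by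
  have key : ∀ n : ℕ, ∀ k, k ≤ a + n → P k := by
    intro n
    induction n with
    | zero => intro k hk; exact ha k (by omega)
    | succ n ih =>
      intro k hk
      by_cases h : k ≤ a + n
      · exact ih k h
      · exact hstep k (ih (k - 1) (by omega))
  intro k
  exact key (k - a).toNat k (by omega)

variable (σ : V →ₗ[ℝ] V)

private def conjSL (hσ : IsConjugation σ) : V →ₛₗ[starRingEnd ℂ] V where
  toFun := σ
  map_add' := map_add σ
  map_smul' := hσ.2

variable (hσ : IsConjugation σ)

private def sconj (S : Submodule ℂ V) : Submodule ℂ V := S.map (conjSL σ hσ)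

private lemma mem_sconj {S : Submodule ℂ V} {x : V} : x ∈ sconj σ hσ S ↔ σ x ∈ S := by
  constructor
  · rintro ⟨a, ha, rfl⟩
    simpa [conjSL, hσ.1 a] using ha
  · intro h
    exact ⟨σ x, h, hσ.1 x⟩

private lemma sconj_mem {S : Submodule ℂ V} {x : V} (h : x ∈ S) : σ x ∈ sconj σ hσ S :=
  ⟨x, h, rfl⟩

private lemma sconj_mono {S T : Submodule ℂ V} (h : S ≤ T) : sconj σ hσ S ≤ sconj σ hσ T :=
  Submodule.map_mono h

private lemma sconj_sconj (S : Submodule ℂ V) : sconj σ hσ (sconj σ hσ S) = S := by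
  ext x
  rw [mem_sconj, mem_sconj, hσ.1]

private lemma sconj_sup (S T : Submodule ℂ V) :
    sconj σ hσ (S ⊔ T) = sconj σ hσ S ⊔ sconj σ hσ T :=
  Submodule.map_sup _ _ _

private lemma sconj_iSup {ι : Sort*} (S : ι → Submodule ℂ V) :
    sconj σ hσ (⨆ i, S i) = ⨆ i, sconj σ hσ (S i) :=
  Submodule.map_iSup _ _

variable (F W : ℤ → Submodule ℂ V)

/-- The MHS axiom on associated gradeds, elementwise. -/
private def AxT : Prop :=
  ∀ k p : ℤ,
    (∀ v ∈ W k, ∃ a ∈ F p ⊓ W k, ∃ b ∈ F (k - p + 1) ⊓ W k, v - a - σ b ∈ W (k - 1)) ∧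
    (∀ a ∈ F p ⊓ W k, ∀ b ∈ F (k - p + 1) ⊓ W k, a - σ b ∈ W (k - 1) → a ∈ W (k - 1))

private def GF (k p : ℤ) : Submodule ℂ V := (F p ⊓ W k) ⊔ W (k - 1)

private def GC (k q : ℤ) : Submodule ℂ V := sconj σ hσ (F q ⊓ W k) ⊔ W (k - 1)

private def SR (q k : ℤ) : Submodule ℂ V :=
  (F q ⊓ W k) ⊔ ⨆ i : ℕ, (F (q - (i + 1)) ⊓ W (k - (i + 1) - 1))

private def DD (p q : ℤ) : Submodule ℂ V := F p ⊓ W (p + q) ⊓ sconj σ hσ (SR F W q (p + q))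

private lemma sconj_W (hσW : ∀ k : ℤ, ∀ v ∈ W k, σ v ∈ W k) (k : ℤ) :
    sconj σ hσ (W k) = W k := by
  ext x
  rw [mem_sconj]
  exact ⟨fun h => by simpa [hσ.1] using hσW k _ h, fun h => hσW k _ h⟩

private lemma sconj_inf_W_le (hσW : ∀ k : ℤ, ∀ v ∈ W k, σ v ∈ W k) (S : Submodule ℂ V)
    (k : ℤ) : sconj σ hσ (S ⊓ W k) ≤ W k := by
  intro x hx
  rw [mem_sconj] at hx
  have := hσW k _ hx.2
  simpa [hσ.1] using this

private lemma W_le_GF (k p : ℤ) : W (k - 1) ≤ GF F W k p := le_sup_right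
private lemma W_le_GC (k q : ℤ) : W (k - 1) ≤ GC σ hσ F W k q := le_sup_right

private lemma GF_le_W (hWm : Monotone W) (k p : ℤ) : GF F W k p ≤ W k :=
  sup_le (inf_le_right) (hWm (by omega))

private lemma GF_anti (hFa : Antitone F) (k : ℤ) {p p' : ℤ} (h : p ≤ p') :
    GF F W k p' ≤ GF F W k p :=
  sup_le (le_sup_of_le_left (inf_le_inf_right _ (hFa h))) le_sup_right

private lemma ax_disj (hax : AxT σ F W) (k p : ℤ) :
    GF F W k p ⊓ GC σ hσ F W k (k - p + 1) ≤ W (k - 1) := by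
  intro x hx
  obtain ⟨hx1, hx2⟩ := Submodule.mem_inf.mp hx
  rw [GF, Submodule.mem_sup] at hx1
  obtain ⟨f, hf, w1, hw1, hfw⟩ := hx1
  rw [GC, Submodule.mem_sup] at hx2
  obtain ⟨c, hc, w2, hw2, hcw⟩ := hx2
  obtain ⟨b, hb, rfl⟩ := hc
  have hcw' : σ b + w2 = x := hcw
  have hfb : f - σ b ∈ W (k - 1) := by
    have heq : f + w1 = σ b + w2 := hfw.trans hcw'.symm
    have : f - σ b = w2 - w1 := by
      rw [sub_eq_sub_iff_add_eq_add]
      rw [heq]; abel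
    rw [this]
    exact sub_mem hw2 hw1
  have := (hax k p).2 f hf b hb hfb
  rw [← hfw]
  exact add_mem this hw1

private lemma gr_split (hax : AxT σ F W) (hFa : Antitone F) (k p : ℤ) :
    GF F W k p = (GF F W k p ⊓ GC σ hσ F W k (k - p)) ⊔ GF F W k (p + 1) := by
  refine le_antisymm ?_ (sup_le inf_le_left (GF_anti F W hFa k (by omega)))
  intro x hx
  rw [GF, Submodule.mem_sup] at hx
  obtain ⟨f, hf, w, hw, rfl⟩ := hx
  obtain ⟨a, ha, b, hb, hw'⟩ := (hax k (p + 1)).1 f hf.2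
  have hkp : k - (p + 1) + 1 = k - p := by ring
  rw [hkp] at hb
  have hsb_GC : σ b ∈ GC σ hσ F W k (k - p) := le_sup_left (α := Submodule ℂ V) (sconj_mem σ hσ hb)
  have hsb_GF : σ b ∈ GF F W k p := by
    have h1 : f - a ∈ F p ⊓ W k :=
      sub_mem ⟨hf.1, hf.2⟩ ⟨hFa (by omega) ha.1, ha.2⟩
    have : σ b = (f - a) + -(f - a - σ b) := by abel
    rw [this]
    exact add_mem (le_sup_left (α := Submodule ℂ V) h1) (neg_mem (le_sup_right (α := Submodule ℂ V) hw'))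
  have hxa : f + w = σ b + (a + (f - a - σ b) + w) := by abel
  rw [hxa]
  refine add_mem (le_sup_left (α := Submodule ℂ V) ⟨hsb_GF, hsb_GC⟩) ?_
  refine le_sup_right (α := Submodule ℂ V) ?_
  exact add_mem (add_mem (le_sup_left (α := Submodule ℂ V) ha) (le_sup_right (α := Submodule ℂ V) hw')) (le_sup_right (α := Submodule ℂ V) hw)

private lemma gr_disj (hax : AxT σ F W) (k p : ℤ) :
    (GF F W k p ⊓ GC σ hσ F W k (k - p)) ⊓ GF F W k (p + 1) ≤ W (k - 1) := by
  have := ax_disj σ hσ F W hax k (p + 1)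
  have hkp : k - (p + 1) + 1 = k - p := by ring
  rw [hkp] at this
  intro x hx
  exact this ⟨hx.2, hx.1.2⟩

private lemma GF_eq_sup (hax : AxT σ F W) (hFa : Antitone F) (bF : ℤ) (hbF : F bF = ⊥)
    (k : ℤ) : ∀ p : ℤ,
    GF F W k p = ⨆ (r : ℤ) (_ : p ≤ r), (GF F W k r ⊓ GC σ hσ F W k (k - r)) := by
  refine int_down_induction bF _ ?_ ?_
  · intro p hp
    have hGF : ∀ r, p ≤ r → GF F W k r = W (k - 1) := by
      intro r hr
      have hFr : F r = ⊥ := le_bot_iff.mp (hbF ▸ hFa (le_trans hp hr))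
      rw [GF, hFr]
      simp
    rw [hGF p le_rfl]
    refine le_antisymm ?_ (iSup₂_le fun r hr => le_trans inf_le_left (le_of_eq (hGF r hr)))
    refine le_trans ?_ (le_iSup₂ (f := fun r (_ : p ≤ r) => GF F W k r ⊓ GC σ hσ F W k (k - r)) p le_rfl)
    exact le_inf (W_le_GF F W k p) (W_le_GC σ hσ F W k (k - p))
  · intro p ih
    rw [gr_split σ hσ F W hax hFa k p, ih]
    refine le_antisymm (sup_le ?_ (iSup₂_le fun r hr =>
      le_iSup₂ (f := fun r (_ : p ≤ r) => GF F W k r ⊓ GC σ hσ F W k (k - r)) r (by omega))) ?_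
    · exact le_iSup₂ (f := fun r (_ : p ≤ r) => GF F W k r ⊓ GC σ hσ F W k (k - r)) p le_rfl
    · refine iSup₂_le fun r hr => ?_
      rcases eq_or_lt_of_le hr with h | h
      · subst h; exact le_sup_left
      · exact le_sup_of_le_right
          (le_iSup₂ (f := fun r (_ : p + 1 ≤ r) => GF F W k r ⊓ GC σ hσ F W k (k - r)) r (by omega))

private lemma W_eq_sup_Agr (hax : AxT σ F W) (hFa : Antitone F) (hWm : Monotone W)
    (aF bF : ℤ) (haF : F aF = ⊤) (hbF : F bF = ⊥) (k : ℤ) :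
    W k = ⨆ r : ℤ, (GF F W k r ⊓ GC σ hσ F W k (k - r)) := by
  have h1 : GF F W k aF = W k := by
    rw [GF, haF, top_inf_eq]
    exact sup_eq_left.mpr (hWm (by omega))
  refine le_antisymm ?_ (iSup_le fun r => le_trans inf_le_left (GF_le_W F W hWm k r))
  rw [← h1, GF_eq_sup σ hσ F W hax hFa bF hbF k aF]
  exact iSup₂_le fun r _ => le_iSup (fun r => GF F W k r ⊓ GC σ hσ F W k (k - r)) r

private lemma DD_le_FW (p q : ℤ) : DD σ hσ F W p q ≤ F p ⊓ W (p + q) := inf_le_left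

private lemma sconjSR_le_GC (hσW : ∀ k : ℤ, ∀ v ∈ W k, σ v ∈ W k) (hWm : Monotone W)
    (q k : ℤ) : sconj σ hσ (SR F W q k) ≤ GC σ hσ F W k q := by
  rw [SR, sconj_sup, sconj_iSup]
  refine sup_le le_sup_left (le_sup_of_le_right (iSup_le fun i => ?_))
  exact le_trans (sconj_inf_W_le σ hσ W hσW _ _) (hWm (by omega))

private lemma DD_le_Agr (hσW : ∀ k : ℤ, ∀ v ∈ W k, σ v ∈ W k) (hWm : Monotone W)
    (p q : ℤ) : DD σ hσ F W p q ≤ GF F W (p + q) p ⊓ GC σ hσ F W (p + q) q :=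
  le_inf (le_trans inf_le_left le_sup_left)
    (le_trans inf_le_right (sconjSR_le_GC σ hσ F W hσW hWm q (p + q)))

private lemma descent (hax : AxT σ F W) (hWm : Monotone W) (aW : ℤ) (haW : W aW = ⊥)
    (hFa : Antitone F) (p q k : ℤ) (hpq : p + q = k) :
    ∀ m : ℤ, m ≤ k - 1 → ∀ w ∈ W m, ∃ a ∈ F p ⊓ W m, ∃ c ∈ SR F W q k, w = a + σ c := by
  refine int_up_induction aW
    (fun m => m ≤ k - 1 → ∀ w ∈ W m, ∃ a ∈ F p ⊓ W m, ∃ c ∈ SR F W q k, w = a + σ c) ?_ ?_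
  · intro m hm _ w hw
    have hw0 : w = 0 := by
      have : w ∈ (⊥ : Submodule ℂ V) := haW ▸ (hWm hm hw)
      simpa using this
    exact ⟨0, zero_mem _, 0, zero_mem _, by simp [hw0]⟩
  · intro m ih hm w hw
    obtain ⟨a₀, ha₀, b₀, hb₀, hw'⟩ := (hax m p).1 w hw
    obtain ⟨a', ha', c', hc', heq⟩ := ih (by omega) (w - a₀ - σ b₀) hw'
    have hb₀SR : b₀ ∈ SR F W q k := by
      by_cases hcase : m = k - 1
      · subst hcase
        refine le_sup_left (α := Submodule ℂ V) (?_ : b₀ ∈ F q ⊓ W k)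
        have h1 : (k - 1 : ℤ) - p + 1 = q := by omega
        rw [h1] at hb₀
        exact ⟨hb₀.1, hWm (by omega) hb₀.2⟩
      · set i : ℕ := (k - 2 - m).toNat with hi
        have hi1 : (i : ℤ) + 1 = k - 1 - m := by omega
        refine le_sup_right (α := Submodule ℂ V)
          (Submodule.mem_iSup_of_mem i (?_ : b₀ ∈ F (q - ((i : ℤ) + 1)) ⊓ W (k - ((i : ℤ) + 1) - 1)))
        have h1 : q - ((i : ℤ) + 1) = m - p + 1 := by omega
        have h2 : k - ((i : ℤ) + 1) - 1 = m := by omega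
        rw [h1, h2]
        exact hb₀
    refine ⟨a₀ + a', add_mem ha₀ ⟨ha'.1, hWm (by omega) ha'.2⟩, b₀ + c', add_mem hb₀SR hc', ?_⟩
    rw [map_add]
    have : w - a₀ - σ b₀ = a' + σ c' := heq
    linear_combination (norm := abel) this

private lemma Agr_le_DD_sup (hax : AxT σ F W) (hWm : Monotone W) (aW : ℤ) (haW : W aW = ⊥)
    (hFa : Antitone F) (p q k : ℤ) (hpq : p + q = k) :
    GF F W k p ⊓ GC σ hσ F W k q ≤ DD σ hσ F W p q ⊔ W (k - 1) := by
  intro v hv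
  obtain ⟨hv1, hv2⟩ := Submodule.mem_inf.mp hv
  rw [GF, Submodule.mem_sup] at hv1
  obtain ⟨f, hf, w1, hw1, hfv⟩ := hv1
  rw [GC, Submodule.mem_sup] at hv2
  obtain ⟨c, hc, w2, hw2, hcv⟩ := hv2
  obtain ⟨u, hu, rfl⟩ := hc
  have hcv' : σ u + w2 = v := hcv
  have hfu : f = σ u + (w2 - w1) := by
    have : f + w1 = σ u + w2 := hfv.trans hcv'.symm
    linear_combination (norm := abel) this
  obtain ⟨a, ha, c', hc', heq⟩ := descent σ F W hax hWm aW haW hFa p q k hpq (k - 1)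
    le_rfl (w2 - w1) (sub_mem hw2 hw1)
  rw [Submodule.mem_sup]
  refine ⟨f - a, ?_, w1 + a, add_mem hw1 ha.2, by rw [← hfv]; abel⟩
  rw [DD, hpq]
  refine Submodule.mem_inf.mpr ⟨⟨sub_mem hf.1 ha.1, sub_mem hf.2 (hWm (by omega) ha.2)⟩, ?_⟩
  have hfa : f - a = σ (u + c') := by
    rw [map_add, hfu, heq]
    abel
  rw [hfa]
  exact sconj_mem σ hσ (add_mem (le_sup_left (α := Submodule ℂ V) hu) hc')

private lemma DD_inf_W (hax : AxT σ F W) (hσW : ∀ k : ℤ, ∀ v ∈ W k, σ v ∈ W k)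
    (hWm : Monotone W) (aW : ℤ) (haW : W aW = ⊥) (hFa : Antitone F)
    (p q k : ℤ) (hpq : p + q = k) :
    DD σ hσ F W p q ⊓ W (k - 1) = ⊥ := by
  have Qstep : ∀ m : ℤ, m ≤ k - 1 → ∀ x ∈ DD σ hσ F W p q, x ∈ W m → x ∈ W (m - 1) := by
    intro m hm x hx hxm
    obtain ⟨⟨hxF, hxW⟩, hxR⟩ := Submodule.mem_inf.mp hx
    obtain ⟨s, hs, hsx⟩ := hxR
    have hsx' : σ s = x := hsx
    have hs2 : s ∈ SR F W q k := by rw [← hpq]; exact hs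
    rw [SR, Submodule.mem_sup] at hs2
    obtain ⟨u, hu, t, ht, hst⟩ := hs2
    have htsplit : t ∈ (F (m - p + 1) ⊓ W k) ⊔ W (m - 1) := by
      refine (iSup_le fun i : ℕ => ?_ : (⨆ i : ℕ, (F (q - ((i:ℤ) + 1)) ⊓ W (k - ((i:ℤ) + 1) - 1))) ≤ (F (m - p + 1) ⊓ W k) ⊔ W (m - 1)) ht
      by_cases hcase : (i : ℤ) ≤ k - m - 2
      · refine le_sup_of_le_left (inf_le_inf (hFa (by omega)) (hWm (by omega)))
      · exact le_sup_of_le_right (le_trans inf_le_right (hWm (by omega)))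
    obtain ⟨t₁, ht₁, t₂, ht₂, htt⟩ := Submodule.mem_sup.mp htsplit
    have hB : u + t₁ ∈ F (m - p + 1) ⊓ W k :=
      add_mem ⟨hFa (by omega) hu.1, hu.2⟩ ht₁
    have hxs : x = σ (u + t₁) + σ t₂ := by
      rw [← map_add, ← hsx', ← hst, ← htt]
      abel_nf
    have hσt₂ : σ t₂ ∈ W (m - 1) := hσW _ _ ht₂
    have hσB : σ (u + t₁) ∈ W m := by
      have : σ (u + t₁) = x - σ t₂ := by rw [hxs]; abel
      rw [this]
      exact sub_mem hxm (hWm (by omega) hσt₂)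
    have hBW : u + t₁ ∈ W m := by
      have := hσW m _ hσB
      rwa [hσ.1] at this
    refine (hax m p).2 x ⟨hxF, hxm⟩ (u + t₁) ⟨hB.1, hBW⟩ ?_
    have : x - σ (u + t₁) = σ t₂ := by rw [hxs]; abel
    rw [this]
    exact hσt₂
  rw [eq_bot_iff]
  intro x hx
  obtain ⟨hx1, hx2⟩ := Submodule.mem_inf.mp hx
  have key : ∀ n : ℕ, x ∈ W (k - 1 - n) := by
    intro n
    induction n with
    | zero => simpa using hx2
    | succ n ih =>
      have := Qstep (k - 1 - n) (by omega) x hx1 ih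
      have h2 : (k - 1 - n) - 1 = k - 1 - (n + 1 : ℕ) := by push_cast; ring
      rwa [h2] at this
  have := key (k - 1 - aW).toNat
  have hxbot : x ∈ W aW := hWm (by omega) this
  rw [haW] at hxbot
  simpa using hxbot

private lemma DD_le_F (p q : ℤ) : DD σ hσ F W p q ≤ F p :=
  le_trans inf_le_left inf_le_left

private lemma DD_le_W (hWm : Monotone W) {p q k : ℤ} (h : p + q ≤ k) :
    DD σ hσ F W p q ≤ W k :=
  le_trans (le_trans inf_le_left inf_le_right) (hWm h)

private lemma DD_le_Agr' (hσW : ∀ k : ℤ, ∀ v ∈ W k, σ v ∈ W k) (hWm : Monotone W)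
    {p q k : ℤ} (hpq : p + q = k) :
    DD σ hσ F W p q ≤ GF F W k p ⊓ GC σ hσ F W k q := by
  rw [← hpq]
  exact DD_le_Agr σ hσ F W hσW hWm p q

private lemma Agr_eq (hax : AxT σ F W) (hσW : ∀ k : ℤ, ∀ v ∈ W k, σ v ∈ W k)
    (hWm : Monotone W) (aW : ℤ) (haW : W aW = ⊥) (hFa : Antitone F)
    {p q k : ℤ} (hpq : p + q = k) :
    GF F W k p ⊓ GC σ hσ F W k q = DD σ hσ F W p q ⊔ W (k - 1) :=
  le_antisymm (Agr_le_DD_sup σ hσ F W hax hWm aW haW hFa p q k hpq)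
    (sup_le (DD_le_Agr' σ hσ F W hσW hWm hpq)
      (le_inf (W_le_GF F W k p) (W_le_GC σ hσ F W k q)))

private lemma W_succ (hax : AxT σ F W) (hσW : ∀ k : ℤ, ∀ v ∈ W k, σ v ∈ W k)
    (hWm : Monotone W) (aW aF bF : ℤ) (haW : W aW = ⊥) (haF : F aF = ⊤) (hbF : F bF = ⊥)
    (hFa : Antitone F) (k : ℤ) :
    W k = (⨆ r : ℤ, DD σ hσ F W r (k - r)) ⊔ W (k - 1) := by
  rw [W_eq_sup_Agr σ hσ F W hax hFa hWm aF bF haF hbF k]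
  have h1 : ∀ r : ℤ, GF F W k r ⊓ GC σ hσ F W k (k - r)
      = DD σ hσ F W r (k - r) ⊔ W (k - 1) :=
    fun r => Agr_eq σ hσ F W hax hσW hWm aW haW hFa (by omega)
  calc (⨆ r : ℤ, (GF F W k r ⊓ GC σ hσ F W k (k - r)))
      = ⨆ r : ℤ, (DD σ hσ F W r (k - r) ⊔ W (k - 1)) := iSup_congr h1
    _ = (⨆ r : ℤ, DD σ hσ F W r (k - r)) ⊔ W (k - 1) :=
      (iSup_sup (f := fun r : ℤ => DD σ hσ F W r (k - r)) (a := W (k - 1))).symm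

private lemma W_eq_biSup (hax : AxT σ F W) (hσW : ∀ k : ℤ, ∀ v ∈ W k, σ v ∈ W k)
    (hWm : Monotone W) (aW aF bF : ℤ) (haW : W aW = ⊥) (haF : F aF = ⊤) (hbF : F bF = ⊥)
    (hFa : Antitone F) : ∀ k : ℤ,
    W k = ⨆ (r : ℤ) (s : ℤ) (_ : r + s ≤ k), DD σ hσ F W r s := by
  have hle : ∀ k : ℤ, (⨆ (r : ℤ) (s : ℤ) (_ : r + s ≤ k), DD σ hσ F W r s) ≤ W k :=
    fun k => iSup_le fun r => iSup_le fun s => iSup_le fun h => DD_le_W σ hσ F W hWm h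
  refine int_up_induction aW _ ?_ ?_
  · intro k hk
    refine le_antisymm ?_ (hle k)
    calc W k ≤ W aW := hWm hk
      _ = ⊥ := haW
      _ ≤ _ := bot_le
  · intro k ih
    refine le_antisymm ?_ (hle k)
    rw [W_succ σ hσ F W hax hσW hWm aW aF bF haW haF hbF hFa k]
    refine sup_le (iSup_le fun r => ?_) ?_
    · exact le_iSup_of_le r (le_iSup_of_le (k - r)
        (le_iSup_of_le (by omega) le_rfl))
    · rw [ih]
      exact iSup_le fun r => iSup_le fun s => iSup_le fun h =>
        le_iSup_of_le r (le_iSup_of_le s (le_iSup_of_le (by omega) le_rfl))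

private lemma FW_eq (hax : AxT σ F W) (hσW : ∀ k : ℤ, ∀ v ∈ W k, σ v ∈ W k)
    (hWm : Monotone W) (aW aF bF : ℤ) (haW : W aW = ⊥) (haF : F aF = ⊤) (hbF : F bF = ⊥)
    (hFa : Antitone F) (p : ℤ) : ∀ k : ℤ,
    F p ⊓ W k = ⨆ (r : ℤ) (_ : p ≤ r) (s : ℤ) (_ : r + s ≤ k), DD σ hσ F W r s := by
  have hle : ∀ k : ℤ,
      (⨆ (r : ℤ) (_ : p ≤ r) (s : ℤ) (_ : r + s ≤ k), DD σ hσ F W r s) ≤ F p ⊓ W k :=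
    fun k => iSup_le fun r => iSup_le fun hr => iSup_le fun s => iSup_le fun h =>
      le_inf (le_trans (DD_le_F σ hσ F W r s) (hFa hr)) (DD_le_W σ hσ F W hWm h)
  refine int_up_induction aW _ ?_ ?_
  · intro k hk
    refine le_antisymm ?_ (hle k)
    calc F p ⊓ W k ≤ W k := inf_le_right
      _ ≤ W aW := hWm hk
      _ = ⊥ := haW
      _ ≤ _ := bot_le
  · intro k ih
    refine le_antisymm ?_ (hle k)
    intro x hx
    have hxGF : x ∈ ⨆ (r : ℤ) (_ : p ≤ r), (GF F W k r ⊓ GC σ hσ F W k (k - r)) := by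
      rw [← GF_eq_sup σ hσ F W hax hFa bF hbF k p]
      exact le_sup_left (α := Submodule ℂ V) hx
    have hsplit : (⨆ (r : ℤ) (_ : p ≤ r), (GF F W k r ⊓ GC σ hσ F W k (k - r)))
        ≤ (⨆ (r : ℤ) (_ : p ≤ r), DD σ hσ F W r (k - r)) ⊔ W (k - 1) := by
      refine iSup₂_le fun r hr => ?_
      rw [Agr_eq σ hσ F W hax hσW hWm aW haW hFa (show r + (k - r) = k by omega)]
      refine sup_le ?_ le_sup_right
      exact le_sup_of_le_left
        (le_iSup₂ (f := fun r (_ : p ≤ r) => DD σ hσ F W r (k - r)) r hr)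
    have hx2 := hsplit hxGF
    obtain ⟨d, hd, w, hw, hdw⟩ := Submodule.mem_sup.mp hx2
    have hdM : d ∈ ⨆ (r : ℤ) (_ : p ≤ r) (s : ℤ) (_ : r + s ≤ k), DD σ hσ F W r s := by
      refine (iSup₂_le fun r hr => ?_ :
        (⨆ (r : ℤ) (_ : p ≤ r), DD σ hσ F W r (k - r)) ≤ _) hd
      exact le_iSup_of_le r (le_iSup_of_le hr (le_iSup_of_le (k - r)
        (le_iSup_of_le (by omega) le_rfl)))
    have hdF : d ∈ F p := by
      refine (iSup₂_le fun r hr => ?_ :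
        (⨆ (r : ℤ) (_ : p ≤ r), DD σ hσ F W r (k - r)) ≤ F p) hd
      exact le_trans (DD_le_F σ hσ F W r (k - r)) (hFa hr)
    have hwFW : w ∈ F p ⊓ W (k - 1) := by
      refine ⟨?_, hw⟩
      have : w = x - d := by rw [← hdw]; abel
      rw [this]
      exact sub_mem hx.1 hdF
    have hwM := ih.le hwFW
    have hwM2 : w ∈ ⨆ (r : ℤ) (_ : p ≤ r) (s : ℤ) (_ : r + s ≤ k), DD σ hσ F W r s := by
      refine (iSup_le fun r => iSup_le fun hr => iSup_le fun s' => iSup_le fun h => ?_ :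
        (⨆ (r : ℤ) (_ : p ≤ r) (s : ℤ) (_ : r + s ≤ k - 1), DD σ hσ F W r s) ≤ _) hwM
      exact le_iSup_of_le r (le_iSup_of_le hr (le_iSup_of_le s'
        (le_iSup_of_le (by omega) le_rfl)))
    rw [← hdw]
    exact add_mem hdM hwM2

private lemma Fp_eq (hax : AxT σ F W) (hσW : ∀ k : ℤ, ∀ v ∈ W k, σ v ∈ W k)
    (hWm : Monotone W) (aW aF bF bW : ℤ) (haW : W aW = ⊥) (haF : F aF = ⊤) (hbF : F bF = ⊥)
    (hbW : W bW = ⊤) (hFa : Antitone F) (p : ℤ) :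
    F p = ⨆ (r : ℤ) (_ : p ≤ r) (s : ℤ), DD σ hσ F W r s := by
  refine le_antisymm ?_ (iSup_le fun r => iSup_le fun hr => iSup_le fun s =>
    le_trans (DD_le_F σ hσ F W r s) (hFa hr))
  have h1 : F p = F p ⊓ W bW := by rw [hbW, inf_top_eq]
  rw [h1, FW_eq σ hσ F W hax hσW hWm aW aF bF haW haF hbF hFa p bW]
  exact iSup_le fun r => iSup_le fun hr => iSup_le fun s' => iSup_le fun _ =>
    le_iSup_of_le r (le_iSup_of_le hr (le_iSup_of_le s' le_rfl))

private lemma L2 (hax : AxT σ F W) (hσW : ∀ k : ℤ, ∀ v ∈ W k, σ v ∈ W k)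
    (hWm : Monotone W) (aW : ℤ) (haW : W aW = ⊥) (hFa : Antitone F) (k : ℤ)
    (s : Finset ℤ) (g : ℤ → V)
    (hg : ∀ p, g p ∈ DD σ hσ F W p (k - p)) (hsupp : ∀ p ∉ s, g p = 0)
    (hsum : (∑ p ∈ s, g p) ∈ W (k - 1)) : ∀ p, g p = 0 := by
  classical
  by_cases hne : s.Nonempty
  swap
  · intro p; exact hsupp p (fun hp => hne ⟨p, hp⟩)
  have key : ∀ p₀ : ℤ, ∀ p < p₀, g p = 0 := by
    refine int_up_induction (s.min' hne) _ ?_ ?_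
    · intro p₀ hp₀ p hp
      refine hsupp p fun hps => ?_
      have := s.min'_le p hps
      omega
    · intro p₀ ih p hp
      rcases lt_or_eq_of_le (by omega : p ≤ p₀ - 1) with h | h
      · exact ih p h
      by_cases hPs : p ∈ s
      swap
      · exact hsupp p hPs
      have hsplit := Finset.sum_filter_add_sum_filter_not s (fun x => p < x) g
      have hlow : (∑ x ∈ s.filter (fun x => ¬ p < x), g x) = g p := by
        refine Finset.sum_eq_single p (fun b hb hbP => ?_) (fun hnot => ?_)
        · obtain ⟨hbs, hble⟩ := Finset.mem_filter.mp hb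
          exact ih b (by omega)
        · exact absurd (Finset.mem_filter.mpr ⟨hPs, by omega⟩) hnot
      have hgP_eq : g p = (∑ x ∈ s, g x) - ∑ x ∈ s.filter (fun x => p < x), g x := by
        rw [← hsplit, ← hlow]; abel
      have hgt : (∑ x ∈ s.filter (fun x => p < x), g x) ∈ GF F W k (p + 1) := by
        refine Submodule.sum_mem _ fun x hx => ?_
        obtain ⟨hxs, hpx⟩ := Finset.mem_filter.mp hx
        refine le_sup_left (α := Submodule ℂ V) (?_ : g x ∈ F (p + 1) ⊓ W k)
        exact ⟨hFa (by omega) (DD_le_F σ hσ F W x (k - x) (hg x)),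
          DD_le_W σ hσ F W hWm (by omega) (hg x)⟩
      have hgP1 : g p ∈ GF F W k (p + 1) := by
        rw [hgP_eq]
        exact sub_mem (W_le_GF F W k (p + 1) hsum) hgt
      have hAgr : g p ∈ GF F W k p ⊓ GC σ hσ F W k (k - p) :=
        DD_le_Agr' σ hσ F W hσW hWm (by omega) (hg p)
      have hW1 : g p ∈ W (k - 1) := gr_disj σ hσ F W hax k p ⟨hAgr, hgP1⟩
      have hbot := DD_inf_W σ hσ F W hax hσW hWm aW haW hFa p (k - p) k (by omega)
      have : g p ∈ DD σ hσ F W p (k - p) ⊓ W (k - 1) := ⟨hg p, hW1⟩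
      rw [hbot] at this
      simpa using this
  intro p
  exact key (p + 1) p (by omega)

private lemma L1 (hax : AxT σ F W) (hσW : ∀ k : ℤ, ∀ v ∈ W k, σ v ∈ W k)
    (hWm : Monotone W) (aW : ℤ) (haW : W aW = ⊥) (hFa : Antitone F) :
    ∀ (N : ℕ) (m : ℤ) (s : Finset (ℤ × ℤ)) (g : ℤ × ℤ → V),
    (∀ i, g i ∈ DD σ hσ F W i.1 i.2) → (∀ i ∉ s, g i = 0) →
    (∀ i ∈ s, i.1 + i.2 ≤ m + N) → ((∑ i ∈ s, g i) ∈ W m) →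
    ∀ i : ℤ × ℤ, m < i.1 + i.2 → g i = 0 := by
  classical
  intro N
  induction N with
  | zero =>
    intro m s g hg hsupp hbd hsum i hi
    by_cases his : i ∈ s
    · have := hbd i his; push_cast at this; omega
    · exact hsupp i his
  | succ N ih =>
    intro m s g hg hsupp hbd hsum i hi
    set k := m + N + 1 with hk
    have htop : ∀ p : ℤ, g (p, k - p) = 0 := by
      set s₁ := s.filter (fun j => j.1 + j.2 = k) with hs₁
      have hmem_s₁ : ∀ j ∈ s₁, j.1 + j.2 = k := fun j hj => (Finset.mem_filter.mp hj).2
      have hsum1 : (∑ j ∈ s₁, g j) ∈ W (k - 1) := by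
        have hsplit := Finset.sum_filter_add_sum_filter_not s (fun j => j.1 + j.2 = k) g
        have h2 : (∑ j ∈ s.filter (fun j => ¬ j.1 + j.2 = k), g j) ∈ W (k - 1) := by
          refine Submodule.sum_mem _ fun j hj => ?_
          obtain ⟨hjs, hjk⟩ := Finset.mem_filter.mp hj
          have := hbd j hjs
          exact DD_le_W σ hσ F W hWm (by push_cast at this ⊢; omega) (hg j)
        have h3 : (∑ j ∈ s, g j) ∈ W (k - 1) := hWm (by omega) hsum
        have heq : (∑ j ∈ s₁, g j)
            = (∑ j ∈ s, g j) - ∑ j ∈ s.filter (fun j => ¬ j.1 + j.2 = k), g j := by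
          rw [← hsplit]; abel
        rw [heq]
        exact sub_mem h3 h2
      set s₂ := s₁.image Prod.fst with hs₂
      have hinj : ∀ x ∈ s₁, ∀ y ∈ s₁, x.1 = y.1 → x = y := by
        intro x hx y hy hxy
        have h1 := hmem_s₁ x hx
        have h2 := hmem_s₁ y hy
        exact Prod.ext hxy (by omega)
      have hsum2 : (∑ p ∈ s₂, g (p, k - p)) = ∑ j ∈ s₁, g j := by
        rw [hs₂, Finset.sum_image hinj]
        refine Finset.sum_congr rfl fun j hj => ?_
        have := hmem_s₁ j hj
        have hje : (j.1, k - j.1) = j := Prod.ext rfl (by omega)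
        rw [hje]
      refine L2 σ hσ F W hax hσW hWm aW haW hFa k s₂ (fun p => g (p, k - p))
        (fun p => hg (p, k - p)) ?_ (by rw [hsum2]; exact hsum1)
      intro p hp
      refine hsupp (p, k - p) fun hmem => ?_
      refine hp (Finset.mem_image_of_mem Prod.fst (Finset.mem_filter.mpr ⟨hmem, by omega⟩))
    by_cases hik : i.1 + i.2 = k
    · have hie : i = (i.1, k - i.1) := Prod.ext rfl (by omega)
      rw [hie]
      exact htop i.1
    · refine ih m (s.filter (fun j => j.1 + j.2 ≤ m + N)) g hg ?_ ?_ ?_ i hi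
      · intro j hj
        by_cases hjs : j ∈ s
        · have hb := hbd j hjs
          have hjk : j.1 + j.2 = k := by
            have : ¬ (j.1 + j.2 ≤ m + N) := fun hc => hj (Finset.mem_filter.mpr ⟨hjs, hc⟩)
            push_cast at hb
            omega
          have hje : j = (j.1, k - j.1) := Prod.ext rfl (by omega)
          rw [hje]
          exact htop j.1
        · exact hsupp j hjs
      · intro j hj; exact_mod_cast (Finset.mem_filter.mp hj).2
      · have heq : (∑ j ∈ s.filter (fun j => j.1 + j.2 ≤ m + N), g j) = ∑ j ∈ s, g j := by
          refine Finset.sum_subset (Finset.filter_subset _ _) ?_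
          intro j hjs hjn
          have hb := hbd j hjs
          have hjk : j.1 + j.2 = k := by
            have : ¬ (j.1 + j.2 ≤ m + N) := fun hc => hjn (Finset.mem_filter.mpr ⟨hjs, hc⟩)
            push_cast at hb
            omega
          have hje : j = (j.1, k - j.1) := Prod.ext rfl (by omega)
          rw [hje]
          exact htop j.1
        rw [heq]
        exact hsum

private def RepIn (A : ℤ × ℤ → Submodule ℂ V) (S : Set (ℤ × ℤ)) (x : V) : Prop :=
  ∃ (s : Finset (ℤ × ℤ)) (g : ℤ × ℤ → V), (∀ i, g i ∈ A i) ∧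
    (∀ i ∉ s, g i = 0) ∧ (∀ i, g i ≠ 0 → i ∈ S) ∧ ∑ i ∈ s, g i = x

private lemma repIn_of_mem (A : ℤ × ℤ → Submodule ℂ V) (S : Set (ℤ × ℤ)) (x : V)
    (hx : x ∈ ⨆ (i : ℤ × ℤ) (_ : i ∈ S), A i) : RepIn A S x := by
  classical
  refine Submodule.iSup_induction (motive := RepIn A S)
    (fun i : ℤ × ℤ => ⨆ (_ : i ∈ S), A i) hx ?_ ?_ ?_
  · intro i y hy
    have hy' : y ∈ ⨆ (_ : i ∈ S), A i := hy
    by_cases hiS : i ∈ S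
    · rw [iSup_pos hiS] at hy' 
      refine ⟨{i}, fun j => if j = i then y else 0, ?_, ?_, ?_, ?_⟩
      · intro j
        by_cases h : j = i
        · subst h; simpa using hy' 
        · simp [h]
      · intro j hj
        exact if_neg (by simpa using hj)
      · intro j hj
        by_cases h : j = i
        · subst h; exact hiS
        · simp [h] at hj
      · simp
    · rw [iSup_neg hiS] at hy'
      have : y = 0 := by simpa using hy' 
      subst this
      exact ⟨∅, 0, fun i => zero_mem _, fun i _ => rfl, fun i h => absurd rfl h, by simp⟩
  · exact ⟨∅, 0, fun i => zero_mem _, fun i _ => rfl, fun i h => absurd rfl h, by simp⟩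
  · rintro x y ⟨s, g, hgA, hgs, hgS, rfl⟩ ⟨t, h, hhA, hht, hhS, rfl⟩
    refine ⟨s ∪ t, g + h, fun i => add_mem (hgA i) (hhA i), ?_, ?_, ?_⟩
    · intro i hi
      simp only [Pi.add_apply, hgs i (fun h' => hi (Finset.mem_union_left _ h')),
        hht i (fun h' => hi (Finset.mem_union_right _ h')), add_zero]
    · intro i hi
      by_cases h0 : g i = 0
      · refine hhS i ?_
        simpa [Pi.add_apply, h0] using hi
      · exact hgS i h0
    · simp only [Pi.add_apply]
      rw [Finset.sum_add_distrib]
      congr 1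
      · exact (Finset.sum_subset Finset.subset_union_left (fun j _ hjs => hgs j hjs)).symm
      · exact (Finset.sum_subset Finset.subset_union_right (fun j _ hjt => hht j hjt)).symm

private lemma mem_of_repIn (A : ℤ × ℤ → Submodule ℂ V) (S : Set (ℤ × ℤ)) (x : V)
    (h : RepIn A S x) : x ∈ ⨆ (i : ℤ × ℤ) (_ : i ∈ S), A i := by
  obtain ⟨s, g, hgA, hsupp, hinS, rfl⟩ := h
  refine Submodule.sum_mem _ fun i _ => ?_
  by_cases h0 : g i = 0
  · rw [h0]; exact zero_mem _
  · have hle : A i ≤ ⨆ (j : ℤ × ℤ) (_ : j ∈ S), A j :=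
      le_iSup_of_le i (le_iSup_of_le (hinS i h0) le_rfl)
    exact hle (hgA i)

private lemma rep_unique (hax : AxT σ F W) (hσW : ∀ k : ℤ, ∀ v ∈ W k, σ v ∈ W k)
    (hWm : Monotone W) (aW : ℤ) (haW : W aW = ⊥) (hFa : Antitone F)
    (s t : Finset (ℤ × ℤ)) (g h : ℤ × ℤ → V)
    (hg : ∀ i, g i ∈ DD σ hσ F W i.1 i.2) (hh : ∀ i, h i ∈ DD σ hσ F W i.1 i.2)
    (hgs : ∀ i ∉ s, g i = 0) (hht : ∀ i ∉ t, h i = 0)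
    (hsum : ∑ i ∈ s, g i = ∑ i ∈ t, h i) : ∀ i, g i = h i := by
  classical
  set u := s ∪ t with hu
  set φ : ℤ × ℤ → V := fun i => g i - h i with hφdef
  have hφ : ∀ i, φ i ∈ DD σ hσ F W i.1 i.2 := fun i => sub_mem (hg i) (hh i)
  have hφsupp : ∀ i ∉ u, φ i = 0 := by
    intro i hi
    have h1 : g i = 0 := hgs i (fun h' => hi (Finset.mem_union_left _ h'))
    have h2 : h i = 0 := hht i (fun h' => hi (Finset.mem_union_right _ h'))
    simp [hφdef, h1, h2]
  have hφsum : ∑ i ∈ u, φ i = 0 := by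
    have e1 : ∑ i ∈ u, g i = ∑ i ∈ s, g i :=
      (Finset.sum_subset Finset.subset_union_left (fun j _ hjs => hgs j hjs)).symm
    have e2 : ∑ i ∈ u, h i = ∑ i ∈ t, h i :=
      (Finset.sum_subset Finset.subset_union_right (fun j _ hjt => hht j hjt)).symm
    have : ∑ i ∈ u, φ i = (∑ i ∈ u, g i) - ∑ i ∈ u, h i := by
      rw [hφdef, Finset.sum_sub_distrib]
    rw [this, e1, e2, hsum, sub_self]
  intro i
  by_cases hiu : i ∈ u
  · set wts := u.image (fun j : ℤ × ℤ => j.1 + j.2) with hwts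
    have hne : wts.Nonempty := ⟨i.1 + i.2, Finset.mem_image_of_mem _ hiu⟩
    set m := wts.min' hne - 1 with hm
    set N := (wts.max' hne - m).toNat with hN
    have hminmax : wts.min' hne ≤ wts.max' hne :=
      Finset.min'_le wts _ (wts.max'_mem hne)
    have key := L1 σ hσ F W hax hσW hWm aW haW hFa N m u φ hφ hφsupp ?_ ?_ i ?_
    · exact sub_eq_zero.mp key
    · intro j hj
      have h1 : j.1 + j.2 ≤ wts.max' hne := Finset.le_max' wts _ (Finset.mem_image_of_mem _ hj)
      push_cast
      omega
    · rw [hφsum]; exact zero_mem _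
    · have := wts.min'_le (i.1 + i.2) (Finset.mem_image_of_mem _ hiu)
      omega
  · have h1 : g i = 0 := hgs i (fun h' => hiu (Finset.mem_union_left _ h'))
    have h2 : h i = 0 := hht i (fun h' => hiu (Finset.mem_union_right _ h'))
    rw [h1, h2]

private lemma DD_indep (hax : AxT σ F W) (hσW : ∀ k : ℤ, ∀ v ∈ W k, σ v ∈ W k)
    (hWm : Monotone W) (aW : ℤ) (haW : W aW = ⊥) (hFa : Antitone F) :
    iSupIndep (fun i : ℤ × ℤ => DD σ hσ F W i.1 i.2) := by
  classical
  intro i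
  refine Submodule.disjoint_def.mpr fun x hxi hxsup => ?_
  have hrep : RepIn (fun j : ℤ × ℤ => DD σ hσ F W j.1 j.2) {j | j ≠ i} x :=
    repIn_of_mem _ _ x hxsup
  obtain ⟨s, g, hgA, hsupp, hinS, hsumx⟩ := hrep
  set g' : ℤ × ℤ → V := fun j => if j = i then x else 0 with hg'
  have hg'A : ∀ j, g' j ∈ DD σ hσ F W j.1 j.2 := by
    intro j
    by_cases h : j = i
    · subst h; simpa [hg'] using hxi
    · simp [hg', h]
  have hsum' : ∑ j ∈ {i}, g' j = ∑ j ∈ s, g j := by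
    rw [Finset.sum_singleton, hsumx]
    simp [hg']
  have := rep_unique σ hσ F W hax hσW hWm aW haW hFa {i} s g' g hg'A hgA
    (fun j hj => by rw [hg']; exact if_neg (by simpa using hj)) hsupp hsum' i
  have hgi : g i = 0 := by
    by_contra h0
    exact (hinS i h0) rfl
  simpa [hg', hgi] using this

private lemma DD_internal (hax : AxT σ F W) (hσW : ∀ k : ℤ, ∀ v ∈ W k, σ v ∈ W k)
    (hWm : Monotone W) (aW aF bF bW : ℤ) (haW : W aW = ⊥) (haF : F aF = ⊤) (hbF : F bF = ⊥)
    (hbW : W bW = ⊤) (hFa : Antitone F) :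
    DirectSum.IsInternal (fun i : ℤ × ℤ => DD σ hσ F W i.1 i.2) := by
  rw [DirectSum.isInternal_submodule_iff_iSupIndep_and_iSup_eq_top]
  refine ⟨DD_indep σ hσ F W hax hσW hWm aW haW hFa, ?_⟩
  rw [eq_top_iff, ← hbW]
  rw [W_eq_biSup σ hσ F W hax hσW hWm aW aF bF haW haF hbF hFa bW]
  exact iSup_le fun r => iSup_le fun s' => iSup_le fun _ => le_iSup_of_le (r, s') le_rfl

private def SupOn (S : Set (ℤ × ℤ)) : Submodule ℂ V :=
  ⨆ (i : ℤ × ℤ) (_ : i ∈ S), DD σ hσ F W i.1 i.2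

private lemma DD_le_SupOn {S : Set (ℤ × ℤ)} {i : ℤ × ℤ} (hi : i ∈ S) :
    DD σ hσ F W i.1 i.2 ≤ SupOn σ hσ F W S :=
  le_iSup_of_le i (le_iSup_of_le hi le_rfl)

private lemma SupOn_mono {S T : Set (ℤ × ℤ)} (h : S ⊆ T) :
    SupOn σ hσ F W S ≤ SupOn σ hσ F W T :=
  iSup₂_le fun i hi => DD_le_SupOn σ hσ F W (h hi)

private lemma mem_SupOn_inter (hax : AxT σ F W) (hσW : ∀ k : ℤ, ∀ v ∈ W k, σ v ∈ W k)
    (hWm : Monotone W) (aW : ℤ) (haW : W aW = ⊥) (hFa : Antitone F)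
    {S T : Set (ℤ × ℤ)} {x : V}
    (hS : x ∈ SupOn σ hσ F W S) (hT : x ∈ SupOn σ hσ F W T) :
    x ∈ SupOn σ hσ F W (S ∩ T) := by
  obtain ⟨s, g, hgA, hgs, hgS, hgsum⟩ := repIn_of_mem _ S x hS
  obtain ⟨t, h, hhA, hht, hhT, hhsum⟩ := repIn_of_mem _ T x hT
  have hgh := rep_unique σ hσ F W hax hσW hWm aW haW hFa s t g h hgA hhA hgs hht
    (hgsum.trans hhsum.symm)
  refine mem_of_repIn _ _ x ⟨s, g, hgA, hgs, ?_, hgsum⟩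
  intro i hi
  exact ⟨hgS i hi, hhT i (hgh i ▸ hi)⟩

private lemma W_eq_SupOn (hax : AxT σ F W) (hσW : ∀ k : ℤ, ∀ v ∈ W k, σ v ∈ W k)
    (hWm : Monotone W) (aW aF bF : ℤ) (haW : W aW = ⊥) (haF : F aF = ⊤) (hbF : F bF = ⊥)
    (hFa : Antitone F) (k : ℤ) :
    W k = SupOn σ hσ F W {i : ℤ × ℤ | i.1 + i.2 ≤ k} := by
  rw [W_eq_biSup σ hσ F W hax hσW hWm aW aF bF haW haF hbF hFa k]
  refine le_antisymm
    (iSup_le fun r => iSup_le fun s' => iSup_le fun hrs =>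
      DD_le_SupOn σ hσ F W (show ((r, s') : ℤ × ℤ) ∈ _ from hrs))
    (iSup₂_le fun i hi =>
      le_iSup_of_le i.1 (le_iSup_of_le i.2 (le_iSup_of_le hi le_rfl)))

private lemma FW_eq_SupOn (hax : AxT σ F W) (hσW : ∀ k : ℤ, ∀ v ∈ W k, σ v ∈ W k)
    (hWm : Monotone W) (aW aF bF : ℤ) (haW : W aW = ⊥) (haF : F aF = ⊤) (hbF : F bF = ⊥)
    (hFa : Antitone F) (q k : ℤ) :
    F q ⊓ W k = SupOn σ hσ F W {i : ℤ × ℤ | q ≤ i.1 ∧ i.1 + i.2 ≤ k} := by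
  rw [FW_eq σ hσ F W hax hσW hWm aW aF bF haW haF hbF hFa q k]
  refine le_antisymm
    (iSup_le fun r => iSup_le fun hr => iSup_le fun s' => iSup_le fun hrs =>
      DD_le_SupOn σ hσ F W (S := {i : ℤ × ℤ | q ≤ i.1 ∧ i.1 + i.2 ≤ k}) (i := (r, s'))
        ⟨hr, hrs⟩)
    (iSup₂_le fun i hi =>
      le_iSup_of_le i.1 (le_iSup_of_le hi.1 (le_iSup_of_le i.2 (le_iSup_of_le hi.2 le_rfl))))

private lemma SR_le_SupOn (hax : AxT σ F W) (hσW : ∀ k : ℤ, ∀ v ∈ W k, σ v ∈ W k)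
    (hWm : Monotone W) (aW aF bF : ℤ) (haW : W aW = ⊥) (haF : F aF = ⊤) (hbF : F bF = ⊥)
    (hFa : Antitone F) (p q k : ℤ) (hpq : p + q = k) :
    SR F W q k ≤ SupOn σ hσ F W
      {i : ℤ × ℤ | i = (q, p) ∨ (i.2 < p ∧ i.1 + i.2 ≤ k)} := by
  rw [SR]
  refine sup_le ?_ (iSup_le fun i : ℕ => ?_)
  · rw [FW_eq_SupOn σ hσ F W hax hσW hWm aW aF bF haW haF hbF hFa q k]
    refine SupOn_mono σ hσ F W fun j hj => ?_
    obtain ⟨hj1, hj2⟩ := hj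
    by_cases hcase : j.2 < p
    · exact Or.inr ⟨hcase, hj2⟩
    · refine Or.inl (Prod.ext (by omega) (by omega))
  · rw [FW_eq_SupOn σ hσ F W hax hσW hWm aW aF bF haW haF hbF hFa (q - (i + 1)) (k - (i + 1) - 1)]
    refine SupOn_mono σ hσ F W fun j hj => ?_
    obtain ⟨hj1, hj2⟩ := hj
    exact Or.inr ⟨by omega, by omega⟩

private lemma cmain (hax : AxT σ F W) (hσW : ∀ k : ℤ, ∀ v ∈ W k, σ v ∈ W k)
    (hWm : Monotone W) (aW aF bF : ℤ) (haW : W aW = ⊥) (haF : F aF = ⊤) (hbF : F bF = ⊥)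
    (hFa : Antitone F) (p q k : ℤ) (hpq : p + q = k) (x : V)
    (hx : x ∈ DD σ hσ F W p q) :
    ∃ d ∈ DD σ hσ F W q p,
      σ x - d ∈ SupOn σ hσ F W {i : ℤ × ℤ | i.2 < p ∧ i.1 + i.2 ≤ k - 1} := by
  obtain ⟨hx1, hx2⟩ := Submodule.mem_inf.mp hx
  have hxA : x ∈ GF F W k p ⊓ GC σ hσ F W k q := DD_le_Agr' σ hσ F W hσW hWm hpq hx
  have hσGC : σ x ∈ GC σ hσ F W k p := by
    obtain ⟨f, hf, w, hw, hfw⟩ := Submodule.mem_sup.mp hxA.1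
    rw [← hfw, map_add]
    exact add_mem (le_sup_left (α := Submodule ℂ V) (sconj_mem σ hσ hf))
      (le_sup_right (α := Submodule ℂ V) (hσW _ _ hw))
  have hσGF : σ x ∈ GF F W k q := by
    obtain ⟨c, hc, w, hw, hcw⟩ := Submodule.mem_sup.mp hxA.2
    obtain ⟨u, hu, rfl⟩ := hc
    rw [← hcw, map_add]
    have hcu : σ ((conjSL σ hσ) u) = u := hσ.1 u
    rw [hcu]
    exact add_mem (le_sup_left (α := Submodule ℂ V) hu)
      (le_sup_right (α := Submodule ℂ V) (hσW _ _ hw))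
  have hσAgr : σ x ∈ DD σ hσ F W q p ⊔ W (k - 1) := by
    rw [← Agr_eq σ hσ F W hax hσW hWm aW haW hFa (show q + p = k by omega)]
    exact Submodule.mem_inf.mpr ⟨hσGF, hσGC⟩
  obtain ⟨d, hd, w, hw, hdw⟩ := Submodule.mem_sup.mp hσAgr
  refine ⟨d, hd, ?_⟩
  have hw' : σ x - d = w := by rw [← hdw]; abel
  rw [hw']
  have hσxSR : σ x ∈ SR F W q k := by
    have := (mem_sconj σ hσ).mp hx2
    rwa [hpq] at this
  have h1 : w ∈ SupOn σ hσ F W {i : ℤ × ℤ | i = (q, p) ∨ (i.2 < p ∧ i.1 + i.2 ≤ k)} := by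
    have hσxS := SR_le_SupOn σ hσ F W hax hσW hWm aW aF bF haW haF hbF hFa p q k hpq hσxSR
    have hdS : d ∈ SupOn σ hσ F W {i : ℤ × ℤ | i = (q, p) ∨ (i.2 < p ∧ i.1 + i.2 ≤ k)} :=
      DD_le_SupOn σ hσ F W (show ((q, p) : ℤ × ℤ) ∈ _ from Or.inl rfl) hd
    rw [← hw']
    exact sub_mem hσxS hdS
  have h2 : w ∈ SupOn σ hσ F W {i : ℤ × ℤ | i.1 + i.2 ≤ k - 1} := by
    rw [← W_eq_SupOn σ hσ F W hax hσW hWm aW aF bF haW haF hbF hFa (k - 1)]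
    exact hw
  have h3 := mem_SupOn_inter σ hσ F W hax hσW hWm aW haW hFa h1 h2
  refine SupOn_mono σ hσ F W ?_ h3
  rintro j ⟨hj1 | hj1, hj2⟩
  · exfalso
    subst hj1
    simp only [Set.mem_setOf_eq] at hj2
    omega
  · exact ⟨hj1.1, hj2⟩

private lemma SupOn_sconj_le {S : Set (ℤ × ℤ)} {M : Submodule ℂ V}
    (h : ∀ i ∈ S, ∀ y ∈ DD σ hσ F W i.1 i.2, σ y ∈ M) :
    ∀ x ∈ SupOn σ hσ F W S, σ x ∈ M := by
  intro x hx
  refine Submodule.iSup_induction (motive := fun y => σ y ∈ M)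
    (fun i : ℤ × ℤ => ⨆ (_ : i ∈ S), DD σ hσ F W i.1 i.2) hx ?_
    (show σ (0 : V) ∈ M by rw [map_zero]; exact zero_mem _) ?_
  · intro i y hy
    have hy' : y ∈ ⨆ (_ : i ∈ S), DD σ hσ F W i.1 i.2 := hy
    by_cases hiS : i ∈ S
    · rw [iSup_pos hiS] at hy'
      exact h i hiS y hy'
    · rw [iSup_neg hiS] at hy'
      have : y = 0 := by simpa using hy'
      rw [this, map_zero]
      exact zero_mem _
  · intro a b ha hb
    rw [map_add]
    exact add_mem ha hb

private lemma cfinal (hax : AxT σ F W) (hσW : ∀ k : ℤ, ∀ v ∈ W k, σ v ∈ W k)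
    (hWm : Monotone W) (aW aF bF : ℤ) (haW : W aW = ⊥) (haF : F aF = ⊤) (hbF : F bF = ⊥)
    (hFa : Antitone F) : ∀ k : ℤ, ∀ p q : ℤ, p + q ≤ k → ∀ x ∈ DD σ hσ F W p q,
    σ x ∈ DD σ hσ F W q p ⊔ SupOn σ hσ F W {i : ℤ × ℤ | i.1 < q ∧ i.2 < p} := by
  refine int_up_induction aW _ ?_ ?_
  · intro k hk p q hpq x hx
    have hx0 : x = 0 := by
      have : x ∈ W aW := hWm (le_trans hpq hk) (DD_le_W σ hσ F W hWm le_rfl hx)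
      rw [haW] at this
      simpa using this
    rw [hx0, map_zero]
    exact zero_mem _
  · intro k ih p q hpq x hx
    rcases lt_or_eq_of_le hpq with h | h
    · exact ih p q (by omega) x hx
    obtain ⟨d, hd, hw⟩ := cmain σ hσ F W hax hσW hWm aW aF bF haW haF hbF hFa p q k h x hx
    set w := σ x - d with hwdef
    have hσw1 : σ w ∈ SupOn σ hσ F W {i : ℤ × ℤ | i.1 < p ∧ i.1 + i.2 ≤ k - 1} := by
      refine SupOn_sconj_le σ hσ F W ?_ w hw
      rintro ⟨r, s'⟩ ⟨hs', hrs⟩ y hy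
      have := ih r s' (by simpa using hrs) y hy
      refine (sup_le ?_ ?_ :
        DD σ hσ F W s' r ⊔ SupOn σ hσ F W {i : ℤ × ℤ | i.1 < s' ∧ i.2 < r} ≤ _) this
      · refine DD_le_SupOn σ hσ F W
          (S := {i : ℤ × ℤ | i.1 < p ∧ i.1 + i.2 ≤ k - 1}) (i := (s', r)) ?_
        refine ⟨?_, ?_⟩ <;> · simp only [Set.mem_setOf_eq] at hs' hrs ⊢; omega
      · refine SupOn_mono σ hσ F W fun j hj => ?_
        obtain ⟨hj1, hj2⟩ := hj
        simp only [Set.mem_setOf_eq] at hs' hrs ⊢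
        exact ⟨by omega, by omega⟩
    have hσw2 : σ w ∈ SupOn σ hσ F W
        ({i : ℤ × ℤ | i = (p, q)} ∪ {i : ℤ × ℤ | i.2 < q ∧ i.1 + i.2 ≤ k - 1}) := by
      obtain ⟨e, he, hde⟩ := cmain σ hσ F W hax hσW hWm aW aF bF haW haF hbF hFa q p k
        (by omega) d hd
      have hσweq : σ w = (x - e) - (σ d - e) := by
        rw [hwdef, map_sub]
        have : σ (σ x) = x := hσ.1 x
        rw [this]
        abel
      rw [hσweq]
      refine sub_mem ?_ ?_
      · exact DD_le_SupOn σ hσ F W (show ((p, q) : ℤ × ℤ) ∈ _ from Or.inl rfl)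
          (sub_mem hx he)
      · exact SupOn_mono σ hσ F W (fun j hj => Or.inr hj) hde
    have hσw3 : σ w ∈ SupOn σ hσ F W
        {i : ℤ × ℤ | i.1 < p ∧ i.2 < q ∧ i.1 + i.2 ≤ k - 1} := by
      have h3 := mem_SupOn_inter σ hσ F W hax hσW hWm aW haW hFa hσw1 hσw2
      refine SupOn_mono σ hσ F W ?_ h3
      rintro j ⟨⟨hj1, hj2⟩, hj3 | hj3⟩
      · exfalso
        subst hj3
        simp only [Set.mem_setOf_eq] at hj1 hj2
        omega
      · exact ⟨hj1, hj3.1, hj2⟩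
    have hwU : w ∈ SupOn σ hσ F W {i : ℤ × ℤ | i.1 < q ∧ i.2 < p} := by
      have hws : w = σ (σ w) := (hσ.1 w).symm
      rw [hws]
      refine SupOn_sconj_le σ hσ F W ?_ (σ w) hσw3
      rintro ⟨a, b⟩ ⟨ha, hb, hab⟩ y hy
      have := ih a b (by simpa using hab) y hy
      refine (sup_le ?_ ?_ :
        DD σ hσ F W b a ⊔ SupOn σ hσ F W {i : ℤ × ℤ | i.1 < b ∧ i.2 < a} ≤ _) this
      · refine DD_le_SupOn σ hσ F W
          (S := {i : ℤ × ℤ | i.1 < q ∧ i.2 < p}) (i := (b, a)) ?_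
        refine ⟨?_, ?_⟩ <;> · simp only [Set.mem_setOf_eq] at ha hb ⊢; omega
      · refine SupOn_mono σ hσ F W fun j hj => ?_
        obtain ⟨hj1, hj2⟩ := hj
        simp only [Set.mem_setOf_eq] at ha hb ⊢
        exact ⟨by omega, by omega⟩
    have hfin : σ x = d + w := by rw [hwdef]; abel
    rw [hfin]
    exact add_mem (le_sup_left (α := Submodule ℂ V) hd)
      (le_sup_right (α := Submodule ℂ V) hwU)

private def IsDeligneBigrading' (σ : V →ₗ[ℝ] V)
    (F W : ℤ → Submodule ℂ V) (I : ℤ → ℤ → Submodule ℂ V) : Prop :=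
  DirectSum.IsInternal (fun pq : ℤ × ℤ => I pq.1 pq.2) ∧
  (∀ p : ℤ, F p = ⨆ (r : ℤ) (_ : p ≤ r) (s : ℤ), I r s) ∧
  (∀ k : ℤ, W k = ⨆ (r : ℤ) (s : ℤ) (_ : r + s ≤ k), I r s) ∧
  (∀ p q : ℤ, ∀ v ∈ I p q,
    σ v ∈ I q p ⊔ ⨆ (r : ℤ) (_ : r < q) (s : ℤ) (_ : s < p), I r s)

private theorem main_exun (hσ : IsConjugation σ) (hFW' :
    (Monotone W ∧ (∃ a : ℤ, W a = ⊥) ∧ (∃ b : ℤ, W b = ⊤)) ∧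
    (∀ k : ℤ, ∀ v ∈ W k, σ v ∈ W k) ∧
    (Antitone F ∧ (∃ a : ℤ, F a = ⊤) ∧ (∃ b : ℤ, F b = ⊥)) ∧ AxT σ F W) :
    ∃! I : ℤ → ℤ → Submodule ℂ V, IsDeligneBigrading' σ F W I := by
  classical
  obtain ⟨⟨hWm, ⟨aW, haW⟩, ⟨bW, hbW⟩⟩, hσW, ⟨hFa, ⟨aF, haF⟩, ⟨bF, hbF⟩⟩, hax⟩ := hFW'
  refine ⟨fun p q => DD σ hσ F W p q, ⟨?_, ?_, ?_, ?_⟩, ?_⟩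
  · exact DD_internal σ hσ F W hax hσW hWm aW aF bF bW haW haF hbF hbW hFa
  · exact fun p => Fp_eq σ hσ F W hax hσW hWm aW aF bF bW haW haF hbF hbW hFa p
  · exact fun k => W_eq_biSup σ hσ F W hax hσW hWm aW aF bF haW haF hbF hFa k
  · intro p q v hv
    have h1 := cfinal σ hσ F W hax hσW hWm aW aF bF haW haF hbF hFa (p + q) p q le_rfl v hv
    refine (sup_le le_sup_left (le_sup_of_le_right ?_) :
      DD σ hσ F W q p ⊔ SupOn σ hσ F W {i : ℤ × ℤ | i.1 < q ∧ i.2 < p} ≤ _) h1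
    exact iSup₂_le fun i hi =>
      le_iSup_of_le i.1 (le_iSup_of_le hi.1 (le_iSup_of_le i.2 (le_iSup_of_le hi.2 le_rfl)))
  · intro J hJ
    obtain ⟨hJint, hJF, hJW, hJc⟩ := hJ
    have hJFle : ∀ p q : ℤ, J p q ≤ F p := by
      intro p q
      rw [hJF p]
      exact le_iSup_of_le p (le_iSup_of_le le_rfl (le_iSup_of_le q le_rfl))
    have hJWle : ∀ p q k : ℤ, p + q ≤ k → J p q ≤ W k := by
      intro p q k h
      rw [hJW k]
      exact le_iSup_of_le p (le_iSup_of_le q (le_iSup_of_le h le_rfl))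
    have hJle : ∀ p q : ℤ, J p q ≤ DD σ hσ F W p q := by
      intro p q
      refine le_inf (le_inf (hJFle p q) (hJWle p q _ le_rfl)) ?_
      intro x hx
      rw [mem_sconj]
      have hσx := hJc p q x hx
      refine (sup_le ?_ ?_ :
        J q p ⊔ (⨆ (r : ℤ) (_ : r < q) (s : ℤ) (_ : s < p), J r s) ≤ SR F W q (p + q)) hσx
      · exact le_sup_of_le_left (le_inf (hJFle q p) (hJWle q p (p + q) (by omega)))
      · refine le_sup_of_le_right ?_
        refine iSup_le fun r => iSup_le fun hr => iSup_le fun s => iSup_le fun hs => ?_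
        refine le_iSup_of_le (q - r - 1).toNat ?_
        have h1 : q - (((q - r - 1).toNat : ℤ) + 1) = r := by omega
        have h2 : p + q - (((q - r - 1).toNat : ℤ) + 1) - 1 = p + r - 1 := by omega
        rw [h1, h2]
        exact le_inf (hJFle r s) (hJWle r s (p + r - 1) (by omega))
    funext p q
    refine le_antisymm (hJle p q) ?_
    intro x hx
    have hxtop : x ∈ ⨆ (i : ℤ × ℤ) (_ : i ∈ (Set.univ : Set (ℤ × ℤ))), J i.1 i.2 := by
      have h0 : x ∈ ⨆ i : ℤ × ℤ, J i.1 i.2 := by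
        rw [hJint.submodule_iSup_eq_top]
        trivial
      exact (iSup_le fun i =>
        le_iSup_of_le i (le_iSup_of_le trivial le_rfl) :
        (⨆ i : ℤ × ℤ, J i.1 i.2) ≤ _) h0
    obtain ⟨s, g, hgJ, hgs, _, hgsum⟩ := repIn_of_mem (fun i : ℤ × ℤ => J i.1 i.2) _ x hxtop
    set g' : ℤ × ℤ → V := fun j => if j = (p, q) then x else 0 with hg'def
    have hg'DD : ∀ j, g' j ∈ DD σ hσ F W j.1 j.2 := by
      intro j
      by_cases h : j = (p, q)
      · subst h; simpa [hg'def] using hx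
      · simp [hg'def, h]
    have huniq := rep_unique σ hσ F W hax hσW hWm aW haW hFa s {(p, q)} g g'
      (fun i => hJle i.1 i.2 (hgJ i)) hg'DD hgs
      (fun j hj => by rw [hg'def]; exact if_neg (by simpa using hj))
      (by rw [hgsum, Finset.sum_singleton, hg'def]; simp)
    have hxg : x = g (p, q) := by
      have := huniq (p, q)
      rw [hg'def] at this
      simpa using this.symm
    rw [hxg]
    exact hgJ (p, q)

end DeligneProof

/-- Deligne: a mixed Hodge structure `(F, W)` admits a unique bigrading
`V = ⊕_{p,q} I^{p,q}` satisfying (a), (b), (c). -/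
theorem zero_loci_stmt8 {V : Type*} [AddCommGroup V] [Module ℂ V] [FiniteDimensional ℂ V]
    (σ : V →ₗ[ℝ] V) (hσ : IsConjugation σ)
    (F W : ℤ → Submodule ℂ V) (hFW : IsMHS σ F W) :
    ∃! I : ℤ → ℤ → Submodule ℂ V, IsDeligneBigrading σ F W I := by
  exact main_exun σ F W hσ hFW
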